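/- (Kontsevich's formula.) Let w = c_1⋯c_n be a nonempty word in W^+ and let z ∈ (0,1]; assume z < 1 unless w ∈ W^{++}. Then L_w(z) = ∫_{0 ≤ t_1 ≤ t_2 ≤ ⋯ ≤ t_n ≤ z} f_{c_1}(t_1) f_{c_2}(t_2) ⋯ f_{c_n}(t_n) dt_1 dt_2 ⋯ dt_n, where f_a(t) = 1/(1−t) and f_b(t) = 1/t; in particular, for w ∈ W^{++}, ζ(w) equals this iterated integral over the full simplex 0 ≤ t_1 ≤ ⋯ ≤ t_n ≤ 1. -/

import Mathlib

/-! Words in the letters `a`, `b`; polylogarithms and polyzeta values. -/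

inductive Letter | a | b
deriving DecidableEq

abbrev Word := List Letter

/-- `W⁺` : words not beginning with `b`. -/
def WPlus (w : Word) : Prop := w.head? ≠ some Letter.b

/-- `W⁺⁺` : words not beginning with `b` and not ending with `a`. -/
def WPlusPlus (w : Word) : Prop := w.head? ≠ some Letter.b ∧ w.getLast? ≠ some Letter.a

/-- Auxiliary function computing the composition `λ(w)` of a word. -/
def compAux : ℕ → Word → List ℕ
  | n, [] => [n]
  | n, Letter.b :: w => compAux (n + 1) w
  | n, Letter.a :: w => n :: compAux 1 w

/-- The composition `λ(w)` associated to a (nonempty) word in `W⁺`: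
`λ(a b^{t₁} ⋯ a b^{t_k}) = (1+t₁, …, 1+t_k)`. -/
def comp : Word → List ℕ
  | [] => []
  | _ :: w => compAux 1 w

/-- Index set of a multiple polylogarithm series:
strictly increasing `k`-tuples of positive integers. -/
def PLIdx (k : ℕ) := {f : Fin k → ℕ // StrictMono f ∧ ∀ i, 0 < f i}

/-- The term of the multiple polylogarithm series `L_{r}(z)` at the index `n`. -/
noncomputable def plTerm (r : List ℕ) (z : ℂ) (n : PLIdx r.length) : ℂ :=
  (if h : r.length = 0 then 1 else z ^ n.1 ⟨r.length - 1, by omega⟩) /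
    ∏ i, (n.1 i : ℂ) ^ r.get i

/-- The multiple polylogarithm `L_{r₁,…,r_k}(z) = Σ_{0<n₁<⋯<n_k} z^{n_k}/(n₁^{r₁}⋯n_k^{r_k})`
(equal to `1` for the empty composition). -/
noncomputable def polylog (r : List ℕ) (z : ℂ) : ℂ := ∑' n, plTerm r z n

/-- `L_w(z) := L_{λ(w)}(z)` for a word `w ∈ W⁺`; `L_∅ = 1`. -/
noncomputable def Lw (w : Word) (z : ℂ) : ℂ := polylog (comp w) z

/-- Absolute convergence of the series defining `L_w(z)`. -/
def LwAbsConv (w : Word) (z : ℂ) : Prop := Summable fun n => ‖plTerm (comp w) z n‖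

/-- `ζ(w) = L_w(1)` for `w ∈ W⁺⁺`. -/
noncomputable def zetaW (w : Word) : ℂ := Lw w 1

/-- The integrand letters: `f_a(t) = 1/(1-t)`, `f_b(t) = 1/t`. -/
noncomputable def fLetter : Letter → ℝ → ℝ
  | .a => fun t => (1 - t)⁻¹
  | .b => fun t => t⁻¹

-- ### combinatorics of comp

def incLast : List ℕ → List ℕ
  | [] => []
  | [x] => [x + 1]
  | x :: y :: xs => x :: incLast (y :: xs)

lemma incLast_cons (x : ℕ) (l : List ℕ) (h : l ≠ []) :
    incLast (x :: l) = x :: incLast l := by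
  cases l with
  | nil => exact absurd rfl h
  | cons y ys => rfl

lemma compAux_ne_nil (u : Word) (n : ℕ) : compAux n u ≠ [] := by
  induction u generalizing n with
  | nil => simp [compAux]
  | cons c v ih =>
    cases c with
    | a => simp [compAux]
    | b => simpa [compAux] using ih (n+1)

lemma compAux_append_a (u : Word) (n : ℕ) :
    compAux n (u ++ [Letter.a]) = compAux n u ++ [1] := by
  induction u generalizing n with
  | nil => rfl
  | cons c v ih =>
    cases c with
    | a => simp [compAux, ih]
    | b => simpa [compAux] using ih (n+1)

lemma compAux_append_b (u : Word) (n : ℕ) :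
    compAux n (u ++ [Letter.b]) = incLast (compAux n u) := by
  induction u generalizing n with
  | nil => rfl
  | cons c v ih =>
    cases c with
    | a =>
      simp only [List.cons_append, compAux, ih]
      rw [incLast_cons _ _ (compAux_ne_nil _ _)]
    | b => simpa [compAux] using ih (n+1)

lemma comp_append_a (u : Word) : comp (Letter.a :: u ++ [Letter.a]) = comp (Letter.a :: u) ++ [1] := by
  simp [comp, compAux_append_a]

lemma comp_append_b (u : Word) : comp (Letter.a :: u ++ [Letter.b]) = incLast (comp (Letter.a :: u)) := by
  simp [comp, compAux_append_b]

lemma incLast_length (l : List ℕ) : (incLast l).length = l.length := by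
  induction l with
  | nil => rfl
  | cons x xs ih =>
    cases xs with
    | nil => rfl
    | cons y ys => rw [incLast_cons _ _ (by simp)]; simpa using ih

lemma incLast_get (l : List ℕ) (i : ℕ) (hi : i < l.length) :
    (incLast l)[i]'(by rw [incLast_length]; exact hi) =
      l[i] + if i = l.length - 1 then 1 else 0 := by
  induction l generalizing i with
  | nil => simp at hi
  | cons x xs ih =>
    cases xs with
    | nil =>
      have : i = 0 := by simpa using hi
      subst this
      simp [incLast]
    | cons y ys =>
      cases i with
      | zero => simp [incLast_cons _ _ (List.cons_ne_nil y ys)]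
      | succ j =>
        have h1 : (incLast (x :: y :: ys))[j+1]'(by rw [incLast_length]; exact hi) =
            (incLast (y :: ys))[j]'(by rw [incLast_length]; simpa using hi) := by
          simp [incLast_cons _ _ (List.cons_ne_nil y ys)]
        rw [h1, ih j (by simpa using hi)]
        simp only [List.getElem_cons_succ, List.length_cons, Nat.add_sub_cancel]
        by_cases h : j = ys.length <;> simp [h]

section
variable {k : ℕ}

instance PLIdx.countable (k : ℕ) : Countable (PLIdx k) := by
  unfold PLIdx; infer_instance

instance PLIdx.unique : Unique (PLIdx 0) := by
  unfold PLIdx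
  refine ⟨⟨⟨fun i => i.elim0, ?_, ?_⟩⟩, ?_⟩
  · intro i; exact i.elim0
  · intro i; exact i.elim0
  · intro f; apply Subtype.ext; funext i; exact i.elim0

/-- The last entry of a tuple (0 for the empty tuple). -/
def lastVF {k : ℕ} (f : Fin k → ℕ) : ℕ := if h : 0 < k then f ⟨k - 1, by omega⟩ else 0

lemma le_lastVF (n : PLIdx k) (i : Fin k) : n.1 i ≤ lastVF n.1 := by
  have hk : 0 < k := i.pos
  rw [lastVF, dif_pos hk]
  exact n.2.1.monotone (by simp only [Fin.le_def]; exact Nat.le_sub_one_of_lt i.2)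

lemma lastVF_lt_last (g : PLIdx (k + 1)) :
    lastVF (fun i : Fin k => g.1 i.castSucc) < g.1 (Fin.last k) := by
  by_cases hk : 0 < k
  · rw [lastVF, dif_pos hk]
    exact g.2.1 (by simp only [Fin.lt_def, Fin.coe_castSucc, Fin.val_last]; omega)
  · rw [lastVF, dif_neg hk]
    exact g.2.2 _

lemma strictMono_snoc {f : Fin k → ℕ} (hf : StrictMono f) (y : ℕ) (hy : ∀ i, f i < y) :
    StrictMono (Fin.snoc f y : Fin (k + 1) → ℕ) := by
  intro i j hij
  rcases Fin.eq_castSucc_or_eq_last j with ⟨j', rfl⟩ | rfl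
  · rcases Fin.eq_castSucc_or_eq_last i with ⟨i', rfl⟩ | rfl
    · rw [Fin.snoc_castSucc, Fin.snoc_castSucc]
      exact hf (by simpa using hij)
    · exact absurd hij (by simp only [not_lt, Fin.le_def, Fin.coe_castSucc, Fin.val_last]; omega)
  · rcases Fin.eq_castSucc_or_eq_last i with ⟨i', rfl⟩ | rfl
    · rw [Fin.snoc_castSucc, Fin.snoc_last]
      exact hy i'
    · exact absurd hij (lt_irrefl _)

/-- The equivalence `PLIdx k × ℕ ≃ PLIdx (k+1)` appending a new largest entry. -/
def plEquiv (k : ℕ) : PLIdx k × ℕ ≃ PLIdx (k + 1) where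
  toFun p := ⟨Fin.snoc p.1.1 (lastVF p.1.1 + p.2 + 1),
    strictMono_snoc p.1.2.1 _ (fun i => by have := le_lastVF p.1 i; omega),
    by
      intro i
      rcases Fin.eq_castSucc_or_eq_last i with ⟨j, rfl⟩ | rfl
      · rw [Fin.snoc_castSucc]; exact p.1.2.2 j
      · rw [Fin.snoc_last]; omega⟩
  invFun g :=
    (⟨fun i => g.1 i.castSucc, fun i j h => g.2.1 (by simpa using h), fun i => g.2.2 _⟩,
      g.1 (Fin.last k) - lastVF (fun i : Fin k => g.1 i.castSucc) - 1)
  left_inv p := by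
    obtain ⟨n, m⟩ := p
    have hfun : (fun i : Fin k => (Fin.snoc n.1 (lastVF n.1 + m + 1) : Fin (k+1) → ℕ) i.castSucc)
        = n.1 := by
      funext i; exact Fin.snoc_castSucc _ _ _
    refine Prod.ext (Subtype.ext hfun) ?_
    show (Fin.snoc n.1 (lastVF n.1 + m + 1) : Fin (k+1) → ℕ) (Fin.last k)
        - lastVF (fun i : Fin k => (Fin.snoc n.1 (lastVF n.1 + m + 1) : Fin (k+1) → ℕ) i.castSucc)
        - 1 = m
    rw [Fin.snoc_last, congrArg lastVF hfun]
    omega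
  right_inv g := by
    have hlt := lastVF_lt_last g
    apply Subtype.ext
    show Fin.snoc (fun i : Fin k => g.1 i.castSucc)
        (lastVF (fun i : Fin k => g.1 i.castSucc)
          + (g.1 (Fin.last k) - lastVF (fun i : Fin k => g.1 i.castSucc) - 1) + 1) = g.1
    rw [show lastVF (fun i : Fin k => g.1 i.castSucc)
        + (g.1 (Fin.last k) - lastVF (fun i : Fin k => g.1 i.castSucc) - 1) + 1
        = g.1 (Fin.last k) by omega]
    exact Fin.snoc_init_self g.1

lemma plEquiv_last (k : ℕ) (p : PLIdx k × ℕ) :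
    ((plEquiv k p).1 (Fin.last k)) = lastVF p.1.1 + p.2 + 1 := by
  show (Fin.snoc _ _ : Fin (k+1) → ℕ) _ = _
  rw [Fin.snoc_last]

lemma plEquiv_castSucc (k : ℕ) (p : PLIdx k × ℕ) (i : Fin k) :
    ((plEquiv k p).1 i.castSucc) = p.1.1 i := by
  show (Fin.snoc _ _ : Fin (k+1) → ℕ) _ = _
  rw [Fin.snoc_castSucc]

end

open MeasureTheory Set ENNReal

section series
variable {k : ℕ}

/-- Real term of the polylog series, with explicit length and exponents. -/
noncomputable def Sterm (k : ℕ) (e : Fin k → ℕ) (z : ℝ) (n : PLIdx k) : ℝ :=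
  z ^ lastVF n.1 / ∏ i, (n.1 i : ℝ) ^ e i

/-- ENNReal-valued polylog series. -/
noncomputable def S' (k : ℕ) (e : Fin k → ℕ) (z : ℝ) : ℝ≥0∞ :=
  ∑' n, ENNReal.ofReal (Sterm k e z n)

lemma Sterm_nonneg {e : Fin k → ℕ} {z : ℝ} (hz : 0 ≤ z) (n : PLIdx k) : 0 ≤ Sterm k e z n :=
  div_nonneg (pow_nonneg hz _) (Finset.prod_nonneg fun i _ => pow_nonneg (by positivity) _)

lemma S'_zero (e : Fin 0 → ℕ) (z : ℝ) : S' 0 e z = 1 := by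
  rw [S', tsum_eq_single (default : PLIdx 0) (fun b hb => absurd (Subsingleton.elim b default) hb)]
  simp [Sterm, lastVF]

lemma lastVF_succ (f : Fin (k + 1) → ℕ) : lastVF f = f (Fin.last k) := by
  rw [lastVF, dif_pos (Nat.succ_pos k)]; rfl

lemma lintegral_pow_Ioo (p : ℕ) (z : ℝ) (hz : 0 ≤ z) :
    ∫⁻ s in Ioo (0:ℝ) z, ENNReal.ofReal (s ^ p) = ENNReal.ofReal (z ^ (p+1) / (p+1)) := by
  have hint : IntegrableOn (fun s : ℝ => s ^ p) (Ioo 0 z) := by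
    exact ((intervalIntegral.intervalIntegrable_pow p (a := 0) (b := z)).1.mono_set
      Ioo_subset_Ioc_self)
  rw [← ofReal_integral_eq_lintegral_ofReal hint
      (ae_restrict_of_forall_mem measurableSet_Ioo fun s hs => pow_nonneg hs.1.le p)]
  rw [← integral_Ioc_eq_integral_Ioo, ← intervalIntegral.integral_of_le hz,
    integral_pow]
  norm_num

lemma lintegral_pow_mul_Ioo (p : ℕ) (c z : ℝ) (hc : 0 ≤ c) (hz : 0 ≤ z) :
    ∫⁻ s in Ioo (0:ℝ) z, ENNReal.ofReal (s ^ p * c)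
      = ENNReal.ofReal (z ^ (p+1) / (p+1) * c) := by
  simp_rw [ENNReal.ofReal_mul' hc]
  rw [lintegral_mul_const _ (by fun_prop), lintegral_pow_Ioo p z hz]

lemma geom_expand {s : ℝ} (h0 : 0 ≤ s) (h1 : s < 1) :
    ENNReal.ofReal (1 - s)⁻¹ = ∑' m : ℕ, ENNReal.ofReal (s ^ m) := by
  rw [← tsum_geometric_of_lt_one h0 h1]
  exact ENNReal.ofReal_tsum_of_nonneg (fun m => pow_nonneg h0 m)
    (summable_geometric_of_lt_one h0 h1)

end series

section steps
variable {k : ℕ}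

open MeasureTheory Set ENNReal in
/-- Appending letter `b`: increment the last exponent. -/
lemma S'_step_b (k : ℕ) (e : Fin (k+1) → ℕ) (z : ℝ) (hz0 : 0 < z) :
    S' (k+1) (Function.update e (Fin.last k) (e (Fin.last k) + 1)) z
      = ∫⁻ s in Ioo (0:ℝ) z, ENNReal.ofReal s⁻¹ * S' (k+1) e s := by
  have h1 : ∀ s ∈ Ioo (0:ℝ) z, ENNReal.ofReal s⁻¹ * S' (k+1) e s
      = ∑' n : PLIdx (k+1),
          ENNReal.ofReal (s ^ (n.1 (Fin.last k) - 1) * (∏ i, (n.1 i : ℝ) ^ e i)⁻¹) := by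
    intro s hs
    rw [S', ← ENNReal.tsum_mul_left]
    refine tsum_congr fun n => ?_
    rw [← ENNReal.ofReal_mul (inv_nonneg.2 hs.1.le)]
    congr 1
    have hL : 1 ≤ n.1 (Fin.last k) := n.2.2 _
    have hs0 : (s : ℝ) ≠ 0 := ne_of_gt hs.1
    rw [Sterm, lastVF_succ, div_eq_mul_inv,
      show n.1 (Fin.last k) = (n.1 (Fin.last k) - 1) + 1 by omega, pow_succ]
    field_simp
    rw [Nat.add_sub_cancel]
  rw [setLIntegral_congr_fun measurableSet_Ioo h1,
    lintegral_tsum (fun n => by fun_prop)]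
  rw [S']
  refine tsum_congr fun n => ?_
  rw [lintegral_pow_mul_Ioo _ _ _ (inv_nonneg.2 (Finset.prod_nonneg fun i _ =>
    pow_nonneg (Nat.cast_nonneg _) _)) hz0.le]
  congr 1
  have hL : 1 ≤ n.1 (Fin.last k) := n.2.2 _
  rw [Sterm, lastVF_succ, show n.1 (Fin.last k) - 1 + 1 = n.1 (Fin.last k) by omega]
  have hprod : ∏ i, (n.1 i : ℝ) ^ (Function.update e (Fin.last k) (e (Fin.last k) + 1) i)
      = (∏ i, (n.1 i : ℝ) ^ e i) * (n.1 (Fin.last k) : ℝ) := by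
    rw [Fin.prod_univ_castSucc, Fin.prod_univ_castSucc (f := fun i => (n.1 i : ℝ) ^ e i)]
    have h2 : ∀ i : Fin k, Function.update e (Fin.last k) (e (Fin.last k) + 1) i.castSucc
        = e i.castSucc := fun i => Function.update_of_ne (Fin.castSucc_lt_last i).ne _ _
    simp only [h2, Function.update_self, pow_succ]
    ring
  rw [hprod]
  have hL1 : ((n.1 (Fin.last k) - 1 : ℕ) : ℝ) + 1 = (n.1 (Fin.last k) : ℝ) := by
    push_cast [hL]; ring
  rw [hL1]
  have hD : (∏ i, (n.1 i : ℝ) ^ e i) ≠ 0 :=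
    Finset.prod_ne_zero_iff.2 fun i _ => pow_ne_zero _ (Nat.cast_ne_zero.2 (n.2.2 i).ne')
  have hc : (n.1 (Fin.last k) : ℝ) ≠ 0 := Nat.cast_ne_zero.2 (n.2.2 _).ne'
  field_simp

open MeasureTheory Set ENNReal in
/-- Appending letter `a`: append a new exponent equal to `1`. -/
lemma S'_step_a (k : ℕ) (e : Fin k → ℕ) (z : ℝ) (hz0 : 0 < z) (hz1 : z ≤ 1) :
    S' (k+1) (Fin.snoc e 1) z
      = ∫⁻ s in Ioo (0:ℝ) z, ENNReal.ofReal (1 - s)⁻¹ * S' k e s := by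
  have h1 : ∀ s ∈ Ioo (0:ℝ) z, ENNReal.ofReal (1 - s)⁻¹ * S' k e s
      = ∑' p : PLIdx k × ℕ, ENNReal.ofReal (s ^ (p.2 + lastVF p.1.1)
          * (∏ i, (p.1.1 i : ℝ) ^ e i)⁻¹) := by
    intro s hs
    rw [ENNReal.tsum_prod', S', ← ENNReal.tsum_mul_left]
    refine tsum_congr fun n => ?_
    rw [geom_expand hs.1.le (lt_of_lt_of_le hs.2 hz1), ← ENNReal.tsum_mul_right]
    refine tsum_congr fun m => ?_
    rw [← ENNReal.ofReal_mul (pow_nonneg hs.1.le m)]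
    congr 1
    rw [Sterm, div_eq_mul_inv, ← mul_assoc, ← pow_add]
  rw [setLIntegral_congr_fun measurableSet_Ioo h1,
    lintegral_tsum (fun p => by fun_prop)]
  rw [S', ← Equiv.tsum_eq (plEquiv k), ENNReal.tsum_prod']
  rw [ENNReal.tsum_prod']
  refine tsum_congr fun n => tsum_congr fun m => ?_
  rw [lintegral_pow_mul_Ioo _ _ _ (inv_nonneg.2 (Finset.prod_nonneg fun i _ =>
    pow_nonneg (Nat.cast_nonneg _) _)) hz0.le]
  congr 1
  rw [Sterm, lastVF_succ, plEquiv_last]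
  have hprod : ∏ i, (((plEquiv k (n, m)).1 i : ℝ)) ^ (Fin.snoc e 1 : Fin (k+1) → ℕ) i
      = (∏ i, (n.1 i : ℝ) ^ e i) * ((lastVF n.1 + m + 1 : ℕ) : ℝ) := by
    rw [Fin.prod_univ_castSucc]
    have h2 : ∀ i : Fin k, (((plEquiv k (n, m)).1 i.castSucc : ℝ))
        ^ (Fin.snoc e 1 : Fin (k+1) → ℕ) i.castSucc = (n.1 i : ℝ) ^ e i := by
      intro i
      rw [plEquiv_castSucc, Fin.snoc_castSucc]
    simp only [h2, plEquiv_last, Fin.snoc_last, pow_one]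
  rw [hprod]
  have hm : m + lastVF n.1 = lastVF n.1 + m := Nat.add_comm _ _
  rw [hm]
  have hD : (∏ i, (n.1 i : ℝ) ^ e i) ≠ 0 :=
    Finset.prod_ne_zero_iff.2 fun i _ => pow_ne_zero _ (Nat.cast_ne_zero.2 (n.2.2 i).ne')
  have hc : ((lastVF n.1 + m : ℕ) : ℝ) + 1 ≠ 0 := by positivity
  push_cast at hc ⊢
  field_simp
end steps

open MeasureTheory Set ENNReal

section integralside

/-- The simplex `0 ≤ t 0 ≤ ⋯ ≤ t (n-1) ≤ z`. -/
def simplex (n : ℕ) (z : ℝ) : Set (Fin n → ℝ) :=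
  {t | Monotone t ∧ ∀ i, 0 ≤ t i ∧ t i ≤ z}

lemma measurableSet_simplex (n : ℕ) (z : ℝ) : MeasurableSet (simplex n z) := by
  have h1 : simplex n z = ({t : Fin n → ℝ | Monotone t} ∩
      ⋂ i, ({t : Fin n → ℝ | 0 ≤ t i} ∩ {t : Fin n → ℝ | t i ≤ z})) := by
    ext t
    simp only [simplex, mem_setOf_eq, mem_inter_iff, mem_iInter]
    try tauto
  have h2 : {t : Fin n → ℝ | Monotone t} =
      ⋂ (p : Fin n × Fin n) (_ : p.1 ≤ p.2), {t : Fin n → ℝ | t p.1 ≤ t p.2} := by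
    ext t
    simp only [mem_setOf_eq, mem_iInter]
    exact ⟨fun h p hp => h hp, fun h i j hij => h (i, j) hij⟩
  rw [h1, h2]
  refine MeasurableSet.inter ?_ (MeasurableSet.iInter fun i => ?_)
  · exact MeasurableSet.iInter fun p => MeasurableSet.iInter fun _ =>
      measurableSet_le (measurable_pi_apply _) (measurable_pi_apply _)
  · exact (measurableSet_le measurable_const (measurable_pi_apply _)).inter
      (measurableSet_le (measurable_pi_apply _) measurable_const)

lemma measurable_fLetter (c : Letter) : Measurable (fLetter c) := by
  cases c
  · exact (measurable_const.sub measurable_id).inv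
  · exact measurable_inv

/-- Iterated simplex integral over explicit letter assignments. -/
noncomputable def Jint' (n : ℕ) (f : Fin n → Letter) (z : ℝ) : ℝ≥0∞ :=
  ∫⁻ t in simplex n z, ∏ i, ENNReal.ofReal (fLetter (f i) (t i))

lemma Jint'_zero (f : Fin 0 → Letter) (z : ℝ) : Jint' 0 f z = 1 := by
  rw [Jint']
  have h1 : simplex 0 z = Set.univ := by
    ext t
    simp only [simplex, mem_setOf_eq, mem_univ, iff_true]
    exact ⟨fun i j _ => (i : Fin 0).elim0, fun i => i.elim0⟩
  have h2 : ∀ t : Fin 0 → ℝ, ∏ i, ENNReal.ofReal (fLetter (f i) (t i)) = 1 := by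
    intro t; simp
  simp only [h1, h2, Measure.restrict_univ, lintegral_one]
  rw [show (volume : Measure (Fin 0 → ℝ)) Set.univ = 1 by
    rw [MeasureTheory.volume_pi, Measure.pi_univ]; simp]

lemma mem_simplex_succ {n : ℕ} {z : ℝ} {t : Fin (n+1) → ℝ} :
    t ∈ simplex (n+1) z ↔ (t (Fin.last n) ∈ Icc 0 z ∧
      (fun j : Fin n => t j.castSucc) ∈ simplex n (t (Fin.last n))) := by
  constructor
  · rintro ⟨hm, hb⟩
    exact ⟨⟨(hb _).1, (hb _).2⟩, fun i j hij => hm (by simpa using hij),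
      fun i => ⟨(hb _).1, hm (Fin.le_last _)⟩⟩
  · rintro ⟨⟨h0, hz⟩, hm, hb⟩
    constructor
    · intro i j hij
      rcases Fin.eq_castSucc_or_eq_last j with ⟨j', rfl⟩ | rfl
      · rcases Fin.eq_castSucc_or_eq_last i with ⟨i', rfl⟩ | rfl
        · exact hm (by simpa using hij)
        · exact absurd (lt_of_le_of_lt hij (Fin.castSucc_lt_last j')) (lt_irrefl _)
      · rcases Fin.eq_castSucc_or_eq_last i with ⟨i', rfl⟩ | rfl
        · exact (hb i').2
        · exact le_refl _
    · intro i
      rcases Fin.eq_castSucc_or_eq_last i with ⟨i', rfl⟩ | rfl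
      · exact ⟨(hb i').1, le_trans (hb i').2 hz⟩
      · exact ⟨h0, hz⟩

lemma Jint'_succ (n : ℕ) (f : Fin (n+1) → Letter) (z : ℝ) :
    Jint' (n+1) f z = ∫⁻ s in Icc (0:ℝ) z,
      ENNReal.ofReal (fLetter (f (Fin.last n)) s) * Jint' n (fun j => f j.castSucc) s := by
  classical
  set SP : Set (ℝ × (Fin n → ℝ)) :=
    {q | q.1 ∈ Icc (0:ℝ) z ∧ q.2 ∈ simplex n q.1} with hSP
  have hSPm : MeasurableSet SP := by
    have : SP = (Prod.fst ⁻¹' Icc (0:ℝ) z) ∩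
        ((⋂ (p : Fin n × Fin n) (_ : p.1 ≤ p.2), {q : ℝ × (Fin n → ℝ) | q.2 p.1 ≤ q.2 p.2}) ∩
          ⋂ i, ({q : ℝ × (Fin n → ℝ) | 0 ≤ q.2 i} ∩ {q : ℝ × (Fin n → ℝ) | q.2 i ≤ q.1})) := by
      ext q
      simp only [hSP, mem_setOf_eq, mem_inter_iff, mem_preimage, mem_iInter, simplex]
      constructor
      · rintro ⟨h1, h2, h3⟩
        exact ⟨h1, fun p hp => h2 hp, fun i => h3 i⟩
      · rintro ⟨h1, h2, h3⟩
        exact ⟨h1, fun i j hij => h2 (i, j) hij, h3⟩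
    rw [this]
    refine (measurableSet_Icc.preimage measurable_fst).inter (MeasurableSet.inter ?_ ?_)
    · exact MeasurableSet.iInter fun p => MeasurableSet.iInter fun _ =>
        measurableSet_le (by fun_prop) (by fun_prop)
    · exact MeasurableSet.iInter fun i =>
        (measurableSet_le (by fun_prop) (by fun_prop)).inter
          (measurableSet_le (by fun_prop) (by fun_prop))
  set G : ℝ × (Fin n → ℝ) → ℝ≥0∞ := SP.indicator (fun q =>
    ENNReal.ofReal (fLetter (f (Fin.last n)) q.1) *
      ∏ i, ENNReal.ofReal (fLetter (f i.castSucc) (q.2 i))) with hG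
  have hGm : Measurable G := by
    refine Measurable.indicator ?_ hSPm
    refine Measurable.mul ?_ ?_
    · exact ((measurable_fLetter _).comp measurable_fst).ennreal_ofReal
    · exact Finset.measurable_prod _ fun i _ =>
        (((measurable_fLetter _).comp ((measurable_pi_apply _).comp measurable_snd))).ennreal_ofReal
  have key : ∀ t : Fin (n+1) → ℝ,
      (simplex (n+1) z).indicator
        (fun t => ∏ i, ENNReal.ofReal (fLetter (f i) (t i))) t
      = G ((MeasurableEquiv.piFinSuccAbove (fun _ : Fin (n+1) => ℝ) (Fin.last n)) t) := by
    intro t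
    have he : (MeasurableEquiv.piFinSuccAbove (fun _ : Fin (n+1) => ℝ) (Fin.last n)) t
        = (t (Fin.last n), fun j => t ((Fin.last n).succAbove j)) := rfl
    have hsa : ∀ j : Fin n, (Fin.last n).succAbove j = j.castSucc := fun j => by
      rw [Fin.succAbove_last]
    rw [he, hG]
    by_cases ht : t ∈ simplex (n+1) z
    · rw [indicator_of_mem ht, indicator_of_mem]
      · rw [Fin.prod_univ_castSucc]
        simp only [hsa]
        ring
      · have := mem_simplex_succ.1 ht
        simp only [hSP, mem_setOf_eq, hsa]
        exact this
    · rw [indicator_of_notMem ht, indicator_of_notMem]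
      intro hmem
      apply ht
      rw [mem_simplex_succ]
      simp only [hSP, mem_setOf_eq, hsa] at hmem
      exact hmem
  rw [Jint', ← lintegral_indicator (measurableSet_simplex _ _) _]
  calc ∫⁻ t, (simplex (n+1) z).indicator
        (fun t => ∏ i, ENNReal.ofReal (fLetter (f i) (t i))) t
      = ∫⁻ t, G ((MeasurableEquiv.piFinSuccAbove (fun _ : Fin (n+1) => ℝ) (Fin.last n)) t) := by
        exact lintegral_congr key
    _ = ∫⁻ q, G q ∂((volume : Measure ℝ).prod (volume : Measure (Fin n → ℝ))) := by
        exact (volume_preserving_piFinSuccAbove (fun _ : Fin (n+1) => ℝ) (Fin.last n)).lintegral_comp hGm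
    _ = ∫⁻ s, ∫⁻ u, G (s, u) ∂(volume : Measure (Fin n → ℝ)) ∂(volume : Measure ℝ) := by
        exact lintegral_prod G hGm.aemeasurable
    _ = ∫⁻ s in Icc (0:ℝ) z,
          ENNReal.ofReal (fLetter (f (Fin.last n)) s) * Jint' n (fun j => f j.castSucc) s := by
        rw [← lintegral_indicator measurableSet_Icc _]
        refine lintegral_congr fun s => ?_
        by_cases hs : s ∈ Icc (0:ℝ) z
        · rw [indicator_of_mem hs]
          have : ∀ u : Fin n → ℝ, G (s, u) = (simplex n s).indicator
              (fun u => ENNReal.ofReal (fLetter (f (Fin.last n)) s) *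
                ∏ i, ENNReal.ofReal (fLetter (f i.castSucc) (u i))) u := by
            intro u
            rw [hG]
            by_cases hu : u ∈ simplex n s
            · rw [indicator_of_mem (by exact ⟨hs, hu⟩), indicator_of_mem hu]
            · rw [indicator_of_notMem (fun hmem => hu hmem.2), indicator_of_notMem hu]
          simp only [this]
          rw [lintegral_indicator (measurableSet_simplex _ _) _, Jint']
          exact lintegral_const_mul _ (Finset.measurable_prod _ fun i _ =>
            (((measurable_fLetter _).comp (measurable_pi_apply _))).ennreal_ofReal)
        · rw [indicator_of_notMem hs]
          have : ∀ u : Fin n → ℝ, G (s, u) = 0 := by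
            intro u
            rw [hG, indicator_of_notMem (fun hmem => hs hmem.1)]
          simp only [this, lintegral_const, zero_mul]

end integralside

section glue
open MeasureTheory Set ENNReal

lemma S'_congr {k k' : ℕ} (h : k = k') (e : Fin k → ℕ) (e' : Fin k' → ℕ)
    (he : ∀ i : Fin k, e i = e' (Fin.cast h i)) (z : ℝ) : S' k e z = S' k' e' z := by
  subst h
  rw [show e = e' from funext fun i => he i]

lemma Jint'_congr {n n' : ℕ} (h : n = n') (f : Fin n → Letter) (f' : Fin n' → Letter)
    (hf : ∀ i : Fin n, f i = f' (Fin.cast h i)) (z : ℝ) : Jint' n f z = Jint' n' f' z := by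
  subst h
  rw [show f = f' from funext fun i => hf i]

lemma get_concat' {α : Type*} (l : List α) (x : α) (i : Fin (l.length + 1)) :
    (l ++ [x]).get (Fin.cast (by simp) i) = (Fin.snoc l.get x : Fin (l.length + 1) → α) i := by
  rcases Fin.eq_castSucc_or_eq_last i with ⟨j, rfl⟩ | rfl
  · rw [Fin.snoc_castSucc]
    show (l ++ [x])[(j : ℕ)]'_ = l.get j
    rw [List.getElem_append_left]
    rfl
  · rw [Fin.snoc_last]
    show (l ++ [x])[(l.length : ℕ)]'_ = x
    simp

lemma WPlus_cases (v : Word) (hv : WPlus v) : v = [] ∨ ∃ u, v = Letter.a :: u := by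
  cases v with
  | nil => exact Or.inl rfl
  | cons c u =>
    refine Or.inr ⟨u, ?_⟩
    cases c
    · rfl
    · exact absurd rfl hv

lemma WPlus_of_concat (v : Word) (c : Letter) (hv : WPlus (v ++ [c])) : WPlus v := by
  cases v with
  | nil => simp [WPlus]
  | cons d u =>
    intro h
    exact hv (by simpa using h)

lemma comp_concat_a (v : Word) (hv : WPlus v) :
    comp (v ++ [Letter.a]) = comp v ++ [1] := by
  rcases WPlus_cases v hv with rfl | ⟨u, rfl⟩
  · rfl
  · exact comp_append_a u

lemma comp_length_pos (u : Word) : 0 < (comp (Letter.a :: u)).length := by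
  rw [comp]
  exact List.length_pos_iff.2 (compAux_ne_nil u 1)

lemma fLetter_nonneg (c : Letter) {t : ℝ} (h0 : 0 ≤ t) (h1 : t ≤ 1) : 0 ≤ fLetter c t := by
  cases c
  · exact inv_nonneg.2 (by linarith)
  · exact inv_nonneg.2 h0

/-- The main identity: the iterated integral equals the polylog series, in `ℝ≥0∞`. -/
lemma main_identity (v : Word) : WPlus v → ∀ z : ℝ, 0 < z → z ≤ 1 →
    Jint' v.length v.get z = S' (comp v).length (comp v).get z := by
  induction v using List.reverseRecOn with
  | nil =>
    intro _ z _ _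
    exact (Jint'_zero _ z).trans (S'_zero _ z).symm
  | append_singleton v' c ih =>
    intro hv z hz0 hz1
    have hv' : WPlus v' := WPlus_of_concat v' c hv
    have hlen : (v' ++ [c]).length = v'.length + 1 := by simp
    have step1 : Jint' (v' ++ [c]).length (v' ++ [c]).get z
        = ∫⁻ s in Ioo (0:ℝ) z, ENNReal.ofReal (fLetter c s) * Jint' v'.length v'.get s := by
      rw [Jint'_congr hlen _ (Fin.snoc v'.get c)
        (fun i => by exact get_concat' v' c (Fin.cast hlen i)) z]
      rw [Jint'_succ, ← Measure.restrict_congr_set Ioo_ae_eq_Icc]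
      refine lintegral_congr fun s => ?_
      rw [Fin.snoc_last]
      congr 1
      refine Jint'_congr rfl _ _ (fun i => ?_) s
      rw [Fin.snoc_castSucc]
      rfl
    cases c with
    | a =>
      rw [step1, comp_concat_a v' hv']
      have hK : (comp v').length + 1 = (comp v' ++ [1]).length := by simp
      rw [← S'_congr hK (Fin.snoc (comp v').get 1) _
        (fun i => by exact (get_concat' (comp v') 1 i).symm) z]
      rw [S'_step_a _ _ z hz0 hz1]
      refine setLIntegral_congr_fun measurableSet_Ioo (
        fun s hs => ?_)
      rw [ih hv' s hs.1 (le_trans hs.2.le hz1)]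
      rfl
    | b =>
      obtain ⟨u, rfl⟩ : ∃ u, v' = Letter.a :: u := by
        rcases WPlus_cases v' hv' with rfl | h
        · exact absurd rfl hv
        · exact h
      rw [step1, comp_append_b u]
      set r : List ℕ := comp (Letter.a :: u) with hr
      obtain ⟨k, hk⟩ : ∃ k, r.length = k + 1 :=
        ⟨r.length - 1, by rw [hr]; have := comp_length_pos u; omega⟩
      set E : Fin (k + 1) → ℕ := fun i => r.get (Fin.cast hk.symm i) with hE
      have hinc : k + 1 = (incLast r).length := by rw [incLast_length, hk]
      have he : ∀ i : Fin (k + 1),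
          Function.update E (Fin.last k) (E (Fin.last k) + 1) i
            = (incLast r).get (Fin.cast hinc i) := by
        intro i
        have hi : (i : ℕ) < r.length := by rw [hk]; exact i.2
        have hrhs : (incLast r).get (Fin.cast hinc i)
            = r[(i : ℕ)]'hi + if (i : ℕ) = r.length - 1 then 1 else 0 :=
          incLast_get r i hi
        rw [hrhs]
        by_cases hil : i = Fin.last k
        · subst hil
          rw [Function.update_self, if_pos (by simp [hk])]
          congr 1
        · rw [Function.update_of_ne hil, if_neg ?_]
          · rfl
          · intro hcon
            apply hil
            apply Fin.ext
            simp only [Fin.val_last]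
            omega
      rw [← S'_congr hinc _ _ he z, S'_step_b k E z hz0]
      refine setLIntegral_congr_fun measurableSet_Ioo (
        fun s hs => ?_)
      rw [ih hv' s hs.1 (le_trans hs.2.le hz1)]
      rw [S'_congr hk r.get E (fun i => rfl) s]
      rfl

end glue

lemma toReal_tsum_ofReal {ι : Type*} (g : ι → ℝ) (hg : ∀ n, 0 ≤ g n) :
    (∑' n, ENNReal.ofReal (g n)).toReal = ∑' n, g n := by
  by_cases hs : Summable g
  · rw [← ENNReal.ofReal_tsum_of_nonneg hg hs, ENNReal.toReal_ofReal (tsum_nonneg hg)]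
  · rw [tsum_eq_zero_of_not_summable hs]
    have htop : (∑' n, ENNReal.ofReal (g n)) = ∞ := by
      by_contra h
      apply hs
      have h2 : Summable (fun n => (g n).toNNReal) := by
        apply ENNReal.tsum_coe_ne_top_iff_summable.1
        exact h
      exact (NNReal.summable_coe.2 h2).congr fun n => Real.coe_toNNReal _ (hg n)
    rw [htop, ENNReal.toReal_top]

lemma plTerm_real (r : List ℕ) (z : ℝ) (n : PLIdx r.length) :
    plTerm r (z : ℂ) n = ((Sterm r.length r.get z n : ℝ) : ℂ) := by
  rw [plTerm, Sterm, Complex.ofReal_div]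
  congr 1
  · by_cases h : r.length = 0
    · rw [dif_pos h, lastVF, dif_neg (by omega)]
      norm_num
    · rw [dif_neg h, lastVF, dif_pos (by omega)]
      norm_cast
  · push_cast
    rfl

lemma Lw_eq (w : Word) (z : ℝ) (hz : 0 ≤ z) :
    Lw w (z : ℂ) = ((S' (comp w).length (comp w).get z).toReal : ℂ) := by
  rw [Lw, polylog, S', toReal_tsum_ofReal _ (fun n => Sterm_nonneg hz n), Complex.ofReal_tsum]
  exact tsum_congr fun n => plTerm_real (comp w) z n

open MeasureTheory Set ENNReal in
lemma integral_eq (w : Word) (z : ℝ) (hz0 : 0 ≤ z) (hz1 : z ≤ 1) :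
    (∫ t in simplex w.length z, ∏ i, fLetter (w.get i) (t i))
      = (Jint' w.length w.get z).toReal := by
  rw [integral_eq_lintegral_of_nonneg_ae
    (ae_restrict_of_forall_mem (measurableSet_simplex _ _) fun t ht =>
      Finset.prod_nonneg fun i _ => fLetter_nonneg _ (ht.2 i).1 (le_trans (ht.2 i).2 hz1))
    (Finset.measurable_prod _ fun i _ =>
      ((measurable_fLetter _).comp (measurable_pi_apply _))).aestronglyMeasurable]
  congr 1
  rw [Jint']
  refine setLIntegral_congr_fun (measurableSet_simplex _ _)
    (fun t ht => ?_)
  exact ENNReal.ofReal_prod_of_nonneg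
    fun i _ => fLetter_nonneg _ (ht.2 i).1 (le_trans (ht.2 i).2 hz1)


/-- Kontsevich's formula: for a nonempty word `w = c₁⋯c_n ∈ W⁺` and `z ∈ (0,1]`
(with `z < 1` unless `w ∈ W⁺⁺`),
`L_w(z) = ∫_{0 ≤ t₁ ≤ ⋯ ≤ t_n ≤ z} f_{c₁}(t₁) ⋯ f_{c_n}(t_n) dt₁ ⋯ dt_n`;
in particular for `w ∈ W⁺⁺`, `ζ(w)` is the iterated integral over the full simplex. -/
theorem statement12 (w : Word) (hne : w ≠ []) (hw : WPlus w) :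
    (∀ z : ℝ, 0 < z → z ≤ 1 → (z = 1 → WPlusPlus w) →
      Lw w (z : ℂ) =
        ((∫ t in {t : Fin w.length → ℝ | Monotone t ∧ ∀ i, 0 ≤ t i ∧ t i ≤ z},
          ∏ i, fLetter (w.get i) (t i)) : ℝ)) ∧
    (WPlusPlus w →
      zetaW w =
        ((∫ t in {t : Fin w.length → ℝ | Monotone t ∧ ∀ i, 0 ≤ t i ∧ t i ≤ 1},
          ∏ i, fLetter (w.get i) (t i)) : ℝ)) := by
  have part1 : ∀ z : ℝ, 0 < z → z ≤ 1 →
      Lw w (z : ℂ) =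
        ((∫ t in {t : Fin w.length → ℝ | Monotone t ∧ ∀ i, 0 ≤ t i ∧ t i ≤ z},
          ∏ i, fLetter (w.get i) (t i)) : ℝ) := by
    intro z hz0 hz1
    have hset : {t : Fin w.length → ℝ | Monotone t ∧ ∀ i, 0 ≤ t i ∧ t i ≤ z}
        = simplex w.length z := rfl
    rw [hset, Lw_eq w z hz0.le, integral_eq w z hz0.le hz1,
      main_identity w hw z hz0 hz1]
  refine ⟨fun z hz0 hz1 _ => part1 z hz0 hz1, fun hpp => ?_⟩
  rw [zetaW, show (1:ℂ) = ((1:ℝ):ℂ) by norm_num]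
  exact part1 1 one_pos le_rfl
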